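/- Let n ≥ 1, let U ⊆ ℝⁿ be open and convex, let f : ℝⁿ → ℝⁿ be continuously differentiable on U with Jacobian J_f, let x, y ∈ U, and let A : ℝⁿ → ℝⁿ be an invertible linear map. Assume: (A★1) there is ω★ > 0 such that for every t ∈ [0,1], writing z = t·x + (1−t)·y, one has ‖A⁻¹ (J_f(x) − J_f(z)) (x − y)‖ ≤ ω★ (1−t) ‖x − y‖²; and (A★2) ‖Id − A⁻¹ J_f(x)‖ ≤ κ★ for some κ★ ∈ [0,1). Then the map g(v) = v − A⁻¹ f(v) satisfies ‖g(x) − g(y)‖ ≤ (κ★ + (ω★/2) ‖x − y‖) · ‖x − y‖. -/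

import Mathlib

/-- **Contraction estimate** (pointwise version): under (A★1) along the segment from
`y` to `x` and (A★2) at `x`, the simplified Newton map `g v = v - A⁻¹ (f v)` satisfies
`‖g x - g y‖ ≤ (κ★ + (ω★/2)‖x - y‖)·‖x - y‖`. -/
theorem simplified_newton_contraction_estimate
    {n : ℕ} (hn : 1 ≤ n)
    (U : Set (EuclideanSpace ℝ (Fin n))) (hUopen : IsOpen U) (hUconv : Convex ℝ U)
    (f : EuclideanSpace ℝ (Fin n) → EuclideanSpace ℝ (Fin n))
    (J : EuclideanSpace ℝ (Fin n) →
      (EuclideanSpace ℝ (Fin n) →L[ℝ] EuclideanSpace ℝ (Fin n)))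
    (hf : ∀ x ∈ U, HasFDerivAt f (J x) x)
    (hJcont : ContinuousOn J U)
    (x y : EuclideanSpace ℝ (Fin n)) (hx : x ∈ U) (hy : y ∈ U)
    (A : EuclideanSpace ℝ (Fin n) ≃L[ℝ] EuclideanSpace ℝ (Fin n))
    (ω κ : ℝ) (hω : 0 < ω) (hκ0 : 0 ≤ κ) (hκ1 : κ < 1)
    (hA1 : ∀ t ∈ Set.Icc (0:ℝ) 1,
      ‖A.symm ((J x - J (t • x + (1 - t) • y)) (x - y))‖
        ≤ ω * (1 - t) * ‖x - y‖ ^ 2)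
    (hA2 : ‖ContinuousLinearMap.id ℝ (EuclideanSpace ℝ (Fin n))
        - (A.symm : EuclideanSpace ℝ (Fin n) →L[ℝ] EuclideanSpace ℝ (Fin n)).comp (J x)‖
        ≤ κ) :
    ‖(x - A.symm (f x)) - (y - A.symm (f y))‖ ≤ (κ + ω / 2 * ‖x - y‖) * ‖x - y‖ := by
  set v := x - y with hv
  set z : ℝ → EuclideanSpace ℝ (Fin n) := fun t => t • x + (1 - t) • y with hzdef
  have hzmem : ∀ t ∈ Set.Icc (0:ℝ) 1, z t ∈ U := fun t ht =>
    hUconv hx hy ht.1 (by linarith [ht.2]) (by ring)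
  have hz' : ∀ t : ℝ, HasDerivAt z v t := by
    intro t
    have h1 : HasDerivAt (fun t : ℝ => t • x) ((1:ℝ) • x) t :=
      (hasDerivAt_id t).smul_const x
    have h2 : HasDerivAt (fun t : ℝ => (1 - t) • y) ((-1 : ℝ) • y) t := by
      have := ((hasDerivAt_id t).const_sub 1).smul_const y
      simpa using this
    have := h1.add h2
    have h3 : HasDerivAt z ((1:ℝ) • x + (-1:ℝ) • y) t := this
    rw [hv, sub_eq_add_neg]
    simpa using h3
  set Φ : ℝ → EuclideanSpace ℝ (Fin n) := fun t => t • v - A.symm (f (z t)) with hΦdef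
  set Φ' : ℝ → EuclideanSpace ℝ (Fin n) := fun t => v - A.symm ((J (z t)) v) with hΦ'def
  have hΦ : ∀ t ∈ Set.Icc (0:ℝ) 1, HasDerivAt Φ (Φ' t) t := by
    intro t ht
    have h1 : HasDerivAt (fun t : ℝ => t • v) v t := by
      simpa using (hasDerivAt_id t).smul_const v
    have h2 : HasDerivAt (fun t => f (z t)) ((J (z t)) v) t :=
      (hf (z t) (hzmem t ht)).comp_hasDerivAt t (hz' t)
    have h3 : HasDerivAt (fun t => A.symm (f (z t))) (A.symm ((J (z t)) v)) t :=
      (A.symm.hasFDerivAt).comp_hasDerivAt t h2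
    exact h1.sub h3
  have hzcont : ContinuousOn z (Set.Icc (0:ℝ) 1) := by
    fun_prop
  have hΦ'cont : ContinuousOn Φ' (Set.Icc (0:ℝ) 1) := by
    have hJz : ContinuousOn (fun t => J (z t)) (Set.Icc (0:ℝ) 1) :=
      hJcont.comp hzcont hzmem
    have h1 : ContinuousOn (fun t => (J (z t)) v) (Set.Icc (0:ℝ) 1) :=
      hJz.clm_apply continuousOn_const
    exact continuousOn_const.sub (A.symm.continuous.comp_continuousOn h1)
  have hΦ'int : IntervalIntegrable Φ' MeasureTheory.volume 0 1 :=
    (hΦ'cont.mono (by rw [Set.uIcc_of_le zero_le_one])).intervalIntegrable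
  have key : Φ 1 - Φ 0 = ∫ t in (0:ℝ)..1, Φ' t :=
    (intervalIntegral.integral_eq_sub_of_hasDerivAt
      (fun t ht => hΦ t (by rwa [Set.uIcc_of_le zero_le_one] at ht)) hΦ'int).symm
  have hbound : ∀ t ∈ Set.Icc (0:ℝ) 1, ‖Φ' t‖ ≤ κ * ‖v‖ + ω * (1 - t) * ‖v‖ ^ 2 := by
    intro t ht
    set B : EuclideanSpace ℝ (Fin n) →L[ℝ] EuclideanSpace ℝ (Fin n) :=
      (A.symm : EuclideanSpace ℝ (Fin n) →L[ℝ] EuclideanSpace ℝ (Fin n)) with hB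
    have hsplit : Φ' t = (ContinuousLinearMap.id ℝ (EuclideanSpace ℝ (Fin n))
        - B.comp (J x)) v + A.symm ((J x - J (z t)) v) := by
      simp only [ContinuousLinearMap.sub_apply, ContinuousLinearMap.id_apply,
        ContinuousLinearMap.coe_comp', Function.comp_apply, hB,
        ContinuousLinearEquiv.coe_coe, map_sub, hΦ'def]
      abel
    rw [hsplit]
    refine (norm_add_le _ _).trans (add_le_add ?_ (hA1 t ht))
    calc ‖(ContinuousLinearMap.id ℝ (EuclideanSpace ℝ (Fin n)) - B.comp (J x)) v‖
        ≤ ‖ContinuousLinearMap.id ℝ (EuclideanSpace ℝ (Fin n)) - B.comp (J x)‖ * ‖v‖ :=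
          ContinuousLinearMap.le_opNorm _ v
      _ ≤ κ * ‖v‖ := mul_le_mul_of_nonneg_right hA2 (norm_nonneg v)
  have hib : IntervalIntegrable (fun t => κ * ‖v‖ + ω * (1 - t) * ‖v‖ ^ 2)
      MeasureTheory.volume 0 1 := by
    apply Continuous.intervalIntegrable
    fun_prop
  have hnorm : ‖∫ t in (0:ℝ)..1, Φ' t‖ ≤ ∫ t in (0:ℝ)..1, (κ * ‖v‖ + ω * (1 - t) * ‖v‖ ^ 2) := by
    have he : Set.uIoc (0:ℝ) 1 = Set.Ioc 0 1 := Set.uIoc_of_le zero_le_one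
    have hae : ∀ᵐ t ∂(MeasureTheory.volume.restrict (Set.uIoc (0:ℝ) 1)),
        ‖Φ' t‖ ≤ κ * ‖v‖ + ω * (1 - t) * ‖v‖ ^ 2 := by
      rw [MeasureTheory.ae_restrict_iff' (by rw [he]; exact measurableSet_Ioc)]
      filter_upwards with t ht
      exact hbound t (Set.Ioc_subset_Icc_self (he ▸ ht))
    have h := intervalIntegral.norm_integral_le_abs_of_norm_le hae hib
    rwa [abs_of_nonneg (intervalIntegral.integral_nonneg zero_le_one fun t ht => by
      have h1 : (0:ℝ) ≤ κ * ‖v‖ := mul_nonneg hκ0 (norm_nonneg v)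
      have h2 : (0:ℝ) ≤ ω * (1 - t) * ‖v‖ ^ 2 :=
        mul_nonneg (mul_nonneg hω.le (by linarith [ht.2])) (sq_nonneg _)
      linarith)] at h
  have hint : (∫ t in (0:ℝ)..1, (κ * ‖v‖ + ω * (1 - t) * ‖v‖ ^ 2))
      = κ * ‖v‖ + ω / 2 * ‖v‖ ^ 2 := by
    have : (fun t : ℝ => κ * ‖v‖ + ω * (1 - t) * ‖v‖ ^ 2)
        = fun t : ℝ => (κ * ‖v‖ + ω * ‖v‖ ^ 2) - (ω * ‖v‖ ^ 2) * t := by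
      funext t; ring
    rw [this, intervalIntegral.integral_sub ((by fun_prop : Continuous fun _:ℝ => (κ * ‖v‖ + ω * ‖v‖ ^ 2)).intervalIntegrable 0 1) ((by fun_prop : Continuous fun t:ℝ => (ω * ‖v‖ ^ 2) * t).intervalIntegrable 0 1),
      intervalIntegral.integral_const_mul, integral_id]
    simp; ring
  have hfinal : ‖Φ 1 - Φ 0‖ ≤ κ * ‖v‖ + ω / 2 * ‖v‖ ^ 2 := by
    rw [key]; rw [← hint] at *; exact hnorm
  have hΦ10 : Φ 1 - Φ 0 = (x - A.symm (f x)) - (y - A.symm (f y)) := by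
    simp [hΦdef, hzdef, hv]
    abel
  rw [hΦ10] at hfinal
  calc ‖(x - A.symm (f x)) - (y - A.symm (f y))‖ ≤ κ * ‖v‖ + ω / 2 * ‖v‖ ^ 2 := hfinal
    _ = (κ + ω / 2 * ‖x - y‖) * ‖x - y‖ := by rw [hv]; ring
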